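/- Let A be an N×N complex matrix with det(1+α₊A) ≠ 0 and det(1+α₋A) ≠ 0, let B be an N×k complex matrix and C an m×N complex matrix. If C·Aʲ·B = 0 for every j ∈ ℕ, then C · e_A(z) · B = 0 for every z ∈ Λ₊. (This is the key step showing that the map sending a realization D + C(I−zA)^{−⊙}⊙(zB) to the rational function D + zC(I−zA)^{−1}B is injective.) -/

import Mathlib

open Complex

noncomputable section

/-- The Gaussian integer lattice Λ = ℤ + iℤ. -/
abbrev GI := GaussianInt

/-- The lattice element i. -/
def Ii : GI := ⟨0, 1⟩

/-- The right half-lattice Λ₊ = {z ∈ Λ : Re z ≥ 0}. -/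
def Lp := {z : GI // 0 ≤ z.re}

/-- The point 0 of Λ₊. -/
def pt0 : Lp := ⟨0, le_refl 0⟩

/-- The shift z ↦ z + 1 on Λ₊. -/
def shx (z : Lp) : Lp := ⟨z.1 + 1, by have := z.2; simp [Zsqrtd.re_add]; omega⟩

/-- The shift z ↦ z + i on Λ₊. -/
def shy (z : Lp) : Lp := ⟨z.1 + Ii, by have := z.2; simp [Zsqrtd.re_add, Ii]; omega⟩

/-- α₊ = (1+i)/2. -/
def ap : ℂ := (1 + I) / 2

/-- α₋ = (1−i)/2. -/
def am : ℂ := (1 - I) / 2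

/-- The difference operator δ_x on functions on Λ₊. -/
def dxp (f : Lp → ℂ) : Lp → ℂ := fun z => f (shx z) - f z

/-- The difference operator δ_y on functions on Λ₊. -/
def dyp (f : Lp → ℂ) : Lp → ℂ := fun z => f (shy z) - f z

/-- Discrete analyticity on the right half-lattice Λ₊. -/
def DAp (f : Lp → ℂ) : Prop :=
  ∀ z : Lp, (f (shx (shy z)) - f z) / (1 + I) = (f (shx z) - f (shy z)) / (1 - I)

/-- The defining property of the standard basis of discrete analytic polynomials
on Λ₊. -/
def IsStdBasisP (p : ℕ → Lp → ℂ) : Prop :=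
  (∀ n, DAp (p n)) ∧ (∀ z : Lp, p 0 z = 1) ∧ (∀ n, p (n + 1) pt0 = 0) ∧
    (∀ n, dxp (p (n + 1)) = p n)

/-- e_A(z) = (1+A)^{Re z} (1+α₊A)^{Im z} (1+α₋A)^{−Im z}, where negative integer
powers are powers of the inverse matrix. -/
def eMat {N : ℕ} (A : Matrix (Fin N) (Fin N) ℂ) (z : Lp) : Matrix (Fin N) (Fin N) ℂ :=
  (1 + A) ^ z.1.re.toNat * (1 + ap • A) ^ (z.1.im : ℤ) * (1 + am • A) ^ (-(z.1.im : ℤ))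


section stmt15aux
open Polynomial
variable {N : ℕ} (A : Matrix (Fin N) (Fin N) ℂ)

lemma inv_mem_range {M : Matrix (Fin N) (Fin N) ℂ}
    (hM : M ∈ (Polynomial.aeval (R := ℂ) A).range) (hdet : IsUnit M.det) :
    M⁻¹ ∈ (Polynomial.aeval (R := ℂ) A).range := by
  obtain ⟨q, hq'⟩ := hM
  have hq : aeval A q = M := hq'
  have hch : aeval M M.charpoly = 0 := Matrix.aeval_self_charpoly M
  have h0 : M.charpoly.coeff 0 ≠ 0 := by
    intro h
    have := Matrix.det_eq_sign_charpoly_coeff M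
    rw [h, mul_zero] at this
    exact hdet.ne_zero this
  have hp := Polynomial.X_mul_divX_add M.charpoly
  have hev : M * aeval M M.charpoly.divX + (M.charpoly.coeff 0) • 1 = 0 := by
    rw [← hp, map_add, map_mul, aeval_X, aeval_C, Algebra.algebraMap_eq_smul_one] at hch
    exact hch
  have hmul : M * (-(M.charpoly.coeff 0)⁻¹ • aeval M M.charpoly.divX) = 1 := by
    rw [mul_smul_comm]
    have : M * aeval M M.charpoly.divX = -((M.charpoly.coeff 0) • 1) := by
      linear_combination (norm := module) hev
    rw [this]
    simp [smul_smul, inv_mul_cancel₀ h0]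
  rw [Matrix.inv_eq_right_inv hmul]
  refine Subalgebra.smul_mem _ ?_ _
  refine ⟨M.charpoly.divX.comp q, ?_⟩
  show aeval A (M.charpoly.divX.comp q) = _
  rw [aeval_comp, hq]

lemma zpow_mem_range {M : Matrix (Fin N) (Fin N) ℂ}
    (hM : M ∈ (Polynomial.aeval (R := ℂ) A).range) (hdet : IsUnit M.det) (n : ℤ) :
    M ^ n ∈ (Polynomial.aeval (R := ℂ) A).range := by
  obtain ⟨j, rfl | rfl⟩ := n.eq_nat_or_neg
  · rw [zpow_natCast]; exact pow_mem hM j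
  · rw [Matrix.zpow_neg_natCast]
    exact inv_mem_range A (pow_mem hM j) (by simpa [Matrix.det_pow] using hdet.pow j)

lemma annih_range {k m : ℕ} (B : Matrix (Fin N) (Fin k) ℂ) (C : Matrix (Fin m) (Fin N) ℂ)
    (h : ∀ j : ℕ, C * A ^ j * B = 0) {M : Matrix (Fin N) (Fin N) ℂ}
    (hM : M ∈ (Polynomial.aeval (R := ℂ) A).range) : C * M * B = 0 := by
  obtain ⟨q, hq'⟩ := hM
  have hq : aeval A q = M := hq'
  rw [← hq, Polynomial.aeval_eq_sum_range]
  rw [Matrix.mul_sum, Matrix.sum_mul]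
  refine Finset.sum_eq_zero fun i _ => ?_
  rw [Matrix.mul_smul, Matrix.smul_mul, h i, smul_zero]

end stmt15aux

/-- if det(1+α₊A) ≠ 0 and det(1+α₋A) ≠ 0 and C·Aʲ·B = 0 for all
j ∈ ℕ, then C·e_A(z)·B = 0 for every z ∈ Λ₊. -/
theorem stmt15 (N k m : ℕ) (A : Matrix (Fin N) (Fin N) ℂ)
    (B : Matrix (Fin N) (Fin k) ℂ) (C : Matrix (Fin m) (Fin N) ℂ)
    (hp : (1 + ap • A).det ≠ 0) (hm : (1 + am • A).det ≠ 0)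
    (h : ∀ j : ℕ, C * A ^ j * B = 0) :
    ∀ z : Lp, C * eMat A z * B = 0 := by
  intro z
  have hpu : IsUnit (1 + ap • A).det := isUnit_iff_ne_zero.mpr hp
  have hmu : IsUnit (1 + am • A).det := isUnit_iff_ne_zero.mpr hm
  refine annih_range A B C h ?_
  unfold eMat
  have h1 : (1 + A) ∈ (Polynomial.aeval (R := ℂ) A).range :=
    ⟨1 + Polynomial.X, by
      show Polynomial.aeval A (1 + Polynomial.X) = _
      rw [map_add, map_one, Polynomial.aeval_X]⟩
  have h2 : (1 + ap • A) ∈ (Polynomial.aeval (R := ℂ) A).range :=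
    ⟨1 + ap • Polynomial.X, by
      show Polynomial.aeval A (1 + ap • Polynomial.X) = _
      rw [map_add, map_one, map_smul, Polynomial.aeval_X]⟩
  have h3 : (1 + am • A) ∈ (Polynomial.aeval (R := ℂ) A).range :=
    ⟨1 + am • Polynomial.X, by
      show Polynomial.aeval A (1 + am • Polynomial.X) = _
      rw [map_add, map_one, map_smul, Polynomial.aeval_X]⟩
  exact mul_mem (mul_mem (pow_mem h1 _) (zpow_mem_range A h2 hpu _))
    (zpow_mem_range A h3 hmu _)
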